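/- Given a finite family 𝓕 of subsets of a finite set U, the number of exact covers (subfamilies 𝓕' ⊆ 𝓕 of pairwise disjoint sets whose union is U) equals the coefficient of U in Π over the distinct sets F ∈ 𝓕 of (1[∅] + 1[F]) computed in the convolution ring ℤ[U_{|U|}], where 1[F] is the indicator of the subset F. -/
import Mathlib


open scoped Classical

/-- Convolution product on the ring of integer-valued functions on subsets of a
finite ground set: `(e·f)_X = Σ_{Y ⊆ X} e_Y f_{X∖Y}`. -/
noncomputable def convMul {α : Type*} [DecidableEq α]
    (e f : Finset α → ℤ) : Finset α → ℤ :=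
  fun X => ∑ Y ∈ X.powerset, e Y * f (X \ Y)

/-- The multiplicative identity `1[∅]`. -/
noncomputable def convOne {α : Type*} : Finset α → ℤ :=
  fun X => if X = ∅ then 1 else 0

/-- The indicator `1[F]` of a subset `F`. -/
noncomputable def convInd {α : Type*} (F : Finset α) : Finset α → ℤ :=
  fun X => if X = F then 1 else 0

/-- The product of a list of elements of the convolution ring. -/
noncomputable def convProd {α : Type*} [DecidableEq α]
    (l : List (Finset α → ℤ)) : Finset α → ℤ :=
  l.foldr convMul convOne

noncomputable def ecount {α : Type*} [DecidableEq α]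
    (S : Finset (Finset α)) (X : Finset α) : ℕ :=
  (S.powerset.filter (fun 𝓕' =>
      (∀ F ∈ 𝓕', ∀ G ∈ 𝓕', F ≠ G → Disjoint F G) ∧ 𝓕'.biUnion id = X)).card

lemma convMul_one_ind {α : Type*} [DecidableEq α] (F : Finset α)
    (P : Finset α → ℤ) (X : Finset α) :
    convMul (convOne + convInd F) P X = P X + (if F ⊆ X then P (X \ F) else 0) := by
  unfold convMul convOne convInd
  simp only [Pi.add_apply, add_mul, Finset.sum_add_distrib, ite_mul, one_mul, zero_mul]
  rw [Finset.sum_ite_eq' X.powerset (∅ : Finset α) (fun Y => P (X \ Y)),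
      Finset.sum_ite_eq' X.powerset F (fun Y => P (X \ Y))]
  simp [Finset.mem_powerset]

lemma ecount_empty {α : Type*} [DecidableEq α] (X : Finset α) :
    ecount (∅ : Finset (Finset α)) X = if X = ∅ then 1 else 0 := by
  unfold ecount
  split_ifs with h
  · subst h
    rw [Finset.card_eq_one]
    refine ⟨∅, ?_⟩
    ext 𝓕'
    simp only [Finset.mem_filter, Finset.mem_powerset, Finset.subset_empty,
      Finset.mem_singleton]
    constructor
    · rintro ⟨h1, _⟩; exact h1
    · rintro rfl; simp
  · rw [Finset.card_eq_zero]
    ext 𝓕'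
    simp only [Finset.mem_filter, Finset.mem_powerset, Finset.subset_empty,
      Finset.notMem_empty, iff_false]
    rintro ⟨rfl, _, h2⟩
    exact h (by simpa using h2.symm)

lemma ecount_insert {α : Type*} [DecidableEq α] (F : Finset α)
    (S : Finset (Finset α)) (hF : F ∉ S) (X : Finset α) :
    ecount (insert F S) X = ecount S X + (if F ⊆ X then ecount S (X \ F) else 0) := by
  classical
  unfold ecount
  set P : Finset (Finset α) → Prop := fun 𝓕' =>
    (∀ A ∈ 𝓕', ∀ G ∈ 𝓕', A ≠ G → Disjoint A G) ∧ 𝓕'.biUnion id = X with hP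
  -- split by F ∈ 𝓕'
  have hsplit : ((insert F S).powerset.filter (fun 𝓕' =>
      (∀ A ∈ 𝓕', ∀ G ∈ 𝓕', A ≠ G → Disjoint A G) ∧ 𝓕'.biUnion id = X)).card
      = (((insert F S).powerset.filter (fun 𝓕' =>
      (∀ A ∈ 𝓕', ∀ G ∈ 𝓕', A ≠ G → Disjoint A G) ∧ 𝓕'.biUnion id = X)).filter
        (fun 𝓕' => F ∉ 𝓕')).card
      + (((insert F S).powerset.filter (fun 𝓕' =>
      (∀ A ∈ 𝓕', ∀ G ∈ 𝓕', A ≠ G → Disjoint A G) ∧ 𝓕'.biUnion id = X)).filter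
        (fun 𝓕' => F ∈ 𝓕')).card := by
    have h := Finset.card_filter_add_card_filter_not
      (s := (insert F S).powerset.filter (fun 𝓕' =>
        (∀ A ∈ 𝓕', ∀ G ∈ 𝓕', A ≠ G → Disjoint A G) ∧ 𝓕'.biUnion id = X))
      (p := fun 𝓕' => F ∉ 𝓕')
    simp only [not_not] at h
    exact h.symm
  rw [hsplit]; clear hsplit
  congr 1
  · congr 1
    ext 𝓕'
    simp only [Finset.mem_filter, Finset.mem_powerset]
    constructor
    · rintro ⟨⟨hsub, hcond⟩, hFnot⟩
      refine ⟨fun a ha => ?_, hcond⟩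
      rcases Finset.mem_insert.mp (hsub ha) with rfl | h
      · exact absurd ha hFnot
      · exact h
    · rintro ⟨hsub, hcond⟩
      exact ⟨⟨hsub.trans (Finset.subset_insert _ _), hcond⟩, fun hc => hF (hsub hc)⟩
  · by_cases hFX : F ⊆ X
    · rw [if_pos hFX]
      apply Finset.card_bij (fun 𝓕' _ => 𝓕'.erase F)
      · rintro 𝓕' h
        simp only [Finset.mem_filter, Finset.mem_powerset] at h ⊢
        obtain ⟨⟨hsub, hdisj, hun⟩, hFin⟩ := h
        refine ⟨?_, ?_, ?_⟩
        · intro a ha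
          rcases Finset.mem_insert.mp (hsub (Finset.mem_of_mem_erase ha)) with rfl | h
          · exact absurd rfl (Finset.ne_of_mem_erase ha)
          · exact h
        · intro A hA G hG hne
          exact hdisj A (Finset.mem_of_mem_erase hA) G (Finset.mem_of_mem_erase hG) hne
        · ext x
          simp only [Finset.mem_biUnion, id, Finset.mem_sdiff]
          constructor
          · rintro ⟨G, hG, hx⟩
            have hGF : G ≠ F := Finset.ne_of_mem_erase hG
            have hG' := Finset.mem_of_mem_erase hG
            refine ⟨?_, ?_⟩
            · rw [← hun]; exact Finset.mem_biUnion.mpr ⟨G, hG', hx⟩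
            · exact fun hxF =>
                (Finset.disjoint_left.mp (hdisj G hG' F hFin hGF)) hx hxF
          · rintro ⟨hxX, hxF⟩
            rw [← hun] at hxX
            obtain ⟨G, hG, hx⟩ := Finset.mem_biUnion.mp hxX
            refine ⟨G, Finset.mem_erase.mpr ⟨?_, hG⟩, hx⟩
            rintro rfl; exact hxF hx
      · intro a ha b hb hab
        simp only [Finset.mem_filter] at ha hb
        have h2 : insert F (a.erase F) = insert F (b.erase F) := by rw [hab]
        rwa [Finset.insert_erase ha.2, Finset.insert_erase hb.2] at h2
      · intro 𝓕'' h
        simp only [Finset.mem_filter, Finset.mem_powerset] at h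
        obtain ⟨hsub, hdisj, hun⟩ := h
        have hFnot : F ∉ 𝓕'' := fun hc => hF (hsub hc)
        refine ⟨insert F 𝓕'', ?_, ?_⟩
        · simp only [Finset.mem_filter, Finset.mem_powerset]
          refine ⟨⟨Finset.insert_subset_insert _ hsub, ?_, ?_⟩, Finset.mem_insert_self _ _⟩
          · intro A hA G hG hne
            rcases Finset.mem_insert.mp hA with rfl | hA' <;>
              rcases Finset.mem_insert.mp hG with rfl | hG'
            · exact absurd rfl hne
            · have hGs : G ⊆ X \ A := by
                rw [← hun]; exact Finset.subset_biUnion_of_mem id hG'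
              exact Finset.disjoint_sdiff.mono_right hGs
            · have hAs : A ⊆ X \ G := by
                rw [← hun]; exact Finset.subset_biUnion_of_mem id hA'
              exact Finset.sdiff_disjoint.mono_left hAs
            · exact hdisj A hA' G hG' hne
          · rw [Finset.biUnion_insert, hun]
            simpa using Finset.union_sdiff_of_subset hFX
        · rw [Finset.erase_insert hFnot]
    · rw [if_neg hFX, Finset.card_eq_zero]
      ext 𝓕'
      simp only [Finset.mem_filter, Finset.mem_powerset, Finset.notMem_empty, iff_false]
      rintro ⟨⟨hsub, hdisj, hun⟩, hFin⟩
      exact hFX (hun ▸ Finset.subset_biUnion_of_mem id hFin)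

lemma key_conv {α : Type*} [DecidableEq α] :
    ∀ (l : List (Finset α)), l.Nodup → ∀ X,
      (ecount l.toFinset X : ℤ) = convProd (l.map (fun F => convOne + convInd F)) X := by
  intro l
  induction l with
  | nil =>
    intro _ X
    simp only [List.toFinset_nil, List.map_nil, convProd, List.foldr_nil, convOne,
      ecount_empty]
    split_ifs <;> simp
  | cons F l ih =>
    intro hnd X
    rcases List.nodup_cons.mp hnd with ⟨hFl, hnd'⟩
    have hF : F ∉ l.toFinset := by simpa using hFl
    rw [List.toFinset_cons, ecount_insert F _ hF X]
    show _ = convMul (convOne + convInd F) (convProd (l.map (fun F => convOne + convInd F))) X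
    rw [convMul_one_ind, ← ih hnd' X, ← ih hnd' (X \ F)]
    split_ifs <;> push_cast <;> ring


/-- The number of exact covers of `U` from the family `𝓕` equals the coefficient
of `U` in `Π_{F ∈ 𝓕} (1[∅] + 1[F])` in the convolution ring. -/
theorem card_exact_covers_eq_convProd_coeff {α : Type*} [Fintype α] [DecidableEq α]
    (𝓕 : Finset (Finset α)) :
    ((𝓕.powerset.filter (fun 𝓕' =>
        (∀ F ∈ 𝓕', ∀ G ∈ 𝓕', F ≠ G → Disjoint F G) ∧
          𝓕'.biUnion id = Finset.univ)).card : ℤ)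
      = convProd (𝓕.toList.map (fun F => convOne + convInd F)) Finset.univ := by
  have h := key_conv 𝓕.toList 𝓕.nodup_toList Finset.univ
  rw [Finset.toList_toFinset] at h
  unfold ecount at h
  convert h using 4
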